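/- Let μ, ν be probability measures on ℝ with CDFs F, G. For any K > 0, |∫_{[-K,K]} e^{iux} d(ν - μ)(x)| ≤ 2 sup_x |G(x) - F(x)| + 2K|u|·sup_x |G(x) - F(x)|. -/

import Mathlib

open MeasureTheory Complex

lemma norm_g (u t : ℝ) : ‖Complex.I * u * Complex.exp (Complex.I * u * t)‖ = |u| := by
  rw [show (Complex.I * u * t : ℂ) = ((u*t : ℝ) : ℂ) * Complex.I by push_cast; ring]
  rw [norm_mul, Complex.norm_exp_ofReal_mul_I]
  simp

lemma norm_e (u t : ℝ) : ‖Complex.exp (Complex.I * u * t)‖ = 1 := by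
  rw [show (Complex.I * u * t : ℂ) = ((u*t : ℝ) : ℂ) * Complex.I by push_cast; ring]
  exact Complex.norm_exp_ofReal_mul_I _

lemma hasDeriv_exp (u t : ℝ) :
    HasDerivAt (fun t : ℝ => Complex.exp (Complex.I * u * t))
      (Complex.I * u * Complex.exp (Complex.I * u * t)) t := by
  have h1 : HasDerivAt (fun t : ℝ => (Complex.I * u * t : ℂ)) (Complex.I * u) t := by
    simpa using (Complex.ofRealCLM.hasDerivAt (x := t)).const_mul (Complex.I * u)
  simpa [mul_comm] using h1.cexp

lemma cont_g (u : ℝ) : Continuous (fun t : ℝ => Complex.I * u * Complex.exp (Complex.I * u * t)) := by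
  fun_prop

lemma ftc (u x K : ℝ) :
    ∫ t in x..K, Complex.I * u * Complex.exp (Complex.I * u * t)
      = Complex.exp (Complex.I * u * K) - Complex.exp (Complex.I * u * x) := by
  exact intervalIntegral.integral_eq_sub_of_hasDerivAt (fun t _ => hasDeriv_exp u t)
    ((cont_g u).intervalIntegrable _ _)

lemma key (ρ : Measure ℝ) [IsProbabilityMeasure ρ] (u K : ℝ) :
    ∫ x in Set.Icc (-K) K, Complex.exp (Complex.I * u * x) ∂ρ
      = ((ρ (Set.Icc (-K) K)).toReal : ℂ) * Complex.exp (Complex.I * u * K)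
        - ∫ t in Set.Icc (-K) K,
            ((ρ (Set.Icc (-K) t)).toReal : ℂ) * (Complex.I * u * Complex.exp (Complex.I * u * t)) := by
  set S := Set.Icc (-K) K with hS
  set g := fun t : ℝ => Complex.I * u * Complex.exp (Complex.I * u * t) with hg
  haveI instFin : IsFiniteMeasure (volume.restrict S) :=
    ⟨by rw [Measure.restrict_apply_univ]; simp [hS, Real.volume_Icc]⟩
  have step1 : ∀ x ∈ S, Complex.exp (Complex.I * u * x)
      = Complex.exp (Complex.I * u * K) - ∫ t in S, (if x ≤ t then g t else 0) := by
    intro x hx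
    have hx' : -K ≤ x ∧ x ≤ K := Set.mem_Icc.mp hx
    have e1 : (fun t => if x ≤ t then g t else 0) = Set.indicator (Set.Ici x) g := by
      funext t; by_cases h : x ≤ t <;> simp [Set.indicator, h]
    have e2 : S ∩ Set.Ici x = Set.Icc x K := by
      ext t
      simp only [Set.mem_inter_iff, Set.mem_Icc, Set.mem_Ici, hS]
      constructor
      · rintro ⟨⟨_, h2⟩, h3⟩; exact ⟨h3, h2⟩
      · rintro ⟨h1, h2⟩; exact ⟨⟨hx'.1.trans h1, h2⟩, h1⟩
    rw [e1, setIntegral_indicator measurableSet_Ici, e2,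
      MeasureTheory.integral_Icc_eq_integral_Ioc,
      ← intervalIntegral.integral_of_le hx'.2, ftc u x K]
    ring
  rw [setIntegral_congr_fun measurableSet_Icc step1]
  have hmeas : Measurable (Function.uncurry (fun x t : ℝ => if x ≤ t then g t else 0)) := by
    have : Function.uncurry (fun x t : ℝ => if x ≤ t then g t else 0)
        = Set.indicator {p : ℝ × ℝ | p.1 ≤ p.2} (fun p => g p.2) := by
      funext p; by_cases h : p.1 ≤ p.2 <;>
        simp [Function.uncurry, Set.indicator, h]
    rw [this]
    exact ((cont_g u).measurable.comp measurable_snd).indicator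
      (measurableSet_le measurable_fst measurable_snd)
  have hint : Integrable (Function.uncurry (fun x t : ℝ => if x ≤ t then g t else 0))
      ((ρ.restrict S).prod (volume.restrict S)) := by
    refine Integrable.mono' (integrable_const |u|) hmeas.aestronglyMeasurable (ae_of_all _ ?_)
    rintro ⟨x, t⟩
    by_cases h : x ≤ t
    · simp only [Function.uncurry, h, if_true]
      exact le_of_eq (norm_g u t)
    · simp [Function.uncurry, h]
  have hswap := MeasureTheory.integral_integral_swap hint
  have hsub : ∫ x in S, (Complex.exp (Complex.I * u * K) - ∫ t in S, (if x ≤ t then g t else 0)) ∂ρ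
      = ∫ x in S, Complex.exp (Complex.I * u * K) ∂ρ
        - ∫ x in S, (∫ t in S, (if x ≤ t then g t else 0)) ∂ρ := by
    refine integral_sub (integrable_const _) ?_
    exact hint.integral_prod_left
  rw [hsub, hswap, integral_const]
  congr 1
  · rw [measureReal_def, Measure.restrict_apply_univ, Complex.real_smul]
  · refine setIntegral_congr_fun measurableSet_Icc (fun t ht => ?_)
    have ht' : -K ≤ t ∧ t ≤ K := Set.mem_Icc.mp ht
    have e1 : (fun x => if x ≤ t then g t else 0)
        = Set.indicator (Set.Iic t) (fun _ => g t) := by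
      funext x; by_cases h : x ≤ t <;> simp [Set.indicator, h]
    have e2 : Set.Iic t ∩ S = Set.Icc (-K) t := by
      ext y
      simp only [Set.mem_inter_iff, Set.mem_Icc, Set.mem_Iic, hS]
      constructor
      · rintro ⟨h1, h2, _⟩; exact ⟨h2, h1⟩
      · rintro ⟨h1, h2⟩; exact ⟨h2, h1, h2.trans (ht'.2)⟩
    rw [e1, integral_indicator_const _ measurableSet_Iic,
      measureReal_def, Measure.restrict_apply measurableSet_Iic, e2, Complex.real_smul]

lemma cdf_Icc (ρ : Measure ℝ) [IsProbabilityMeasure ρ] (a t : ℝ) (h : a ≤ t) :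
    (ρ (Set.Icc a t)).toReal = (ρ (Set.Iic t)).toReal - (ρ (Set.Iio a)).toReal := by
  have hset : Set.Icc a t = Set.Iic t \ Set.Iio a := by
    ext y
    simp only [Set.mem_Icc, Set.mem_diff, Set.mem_Iic, Set.mem_Iio, not_lt]
    tauto
  have hsub : Set.Iio a ⊆ Set.Iic t := fun y hy => le_trans (le_of_lt hy) h
  rw [hset, measure_diff hsub measurableSet_Iio.nullMeasurableSet (measure_ne_top ρ _),
    ENNReal.toReal_sub_of_le (measure_mono hsub) (measure_ne_top ρ _)]

lemma iio_bound (μ ν : Measure ℝ) [IsProbabilityMeasure μ] [IsProbabilityMeasure ν]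
    (F G : ℝ → ℝ)
    (hF : ∀ x, F x = (μ (Set.Iic x)).toReal)
    (hG : ∀ x, G x = (ν (Set.Iic x)).toReal)
    (a : ℝ) (hbdd : BddAbove (Set.range fun x => |G x - F x|)) :
    |(ν (Set.Iio a)).toReal - (μ (Set.Iio a)).toReal| ≤ ⨆ x, |G x - F x| := by
  set t : ℕ → ℝ := fun n => a - 1/(n+1) with ht
  have hmono : Monotone (fun n => Set.Iic (t n)) := by
    intro m n hmn
    apply Set.Iic_subset_Iic.mpr
    have : (1:ℝ)/(n+1) ≤ 1/(m+1) := by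
      apply one_div_le_one_div_of_le (by positivity)
      exact_mod_cast Nat.succ_le_succ hmn
    simp only [ht]; linarith
  have hUnion : ⋃ n, Set.Iic (t n) = Set.Iio a := by
    ext y
    simp only [Set.mem_iUnion, Set.mem_Iic, Set.mem_Iio, ht]
    constructor
    · rintro ⟨n, hn⟩
      have : (0:ℝ) < 1/(n+1) := by positivity
      linarith
    · intro hy
      obtain ⟨n, hn⟩ := exists_nat_one_div_lt (show (0:ℝ) < a - y by linarith)
      exact ⟨n, by linarith⟩
  have hlim : ∀ (ρ : Measure ℝ) [IsProbabilityMeasure ρ],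
      Filter.Tendsto (fun n => (ρ (Set.Iic (t n))).toReal) Filter.atTop
        (nhds (ρ (Set.Iio a)).toReal) := by
    intro ρ _
    have h1 := tendsto_measure_iUnion_atTop (μ := ρ) hmono
    rw [hUnion] at h1
    exact (ENNReal.tendsto_toReal (measure_ne_top ρ _)).comp h1
  have h2 : Filter.Tendsto (fun n => |G (t n) - F (t n)|) Filter.atTop
      (nhds |(ν (Set.Iio a)).toReal - (μ (Set.Iio a)).toReal|) := by
    have := ((hlim ν).sub (hlim μ)).abs
    refine this.congr fun n => ?_
    rw [hG, hF]
  refine le_of_tendsto h2 (Filter.Eventually.of_forall fun n => ?_)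
  exact le_ciSup hbdd (t n)

theorem charFun_middle_part_bound (μ ν : Measure ℝ) [IsProbabilityMeasure μ] [IsProbabilityMeasure ν]
    (F G : ℝ → ℝ)
    (hF : ∀ x, F x = (μ (Set.Iic x)).toReal)
    (hG : ∀ x, G x = (ν (Set.Iic x)).toReal)
    (u : ℝ) (K : ℝ) (hK : 0 < K) :
    ‖(∫ x in Set.Icc (-K) K, Complex.exp (Complex.I * u * x) ∂ν)
      - (∫ x in Set.Icc (-K) K, Complex.exp (Complex.I * u * x) ∂μ)‖ ≤
      2 * (⨆ x : ℝ, |G x - F x|) + 2 * K * |u| * (⨆ x : ℝ, |G x - F x|) := by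
  set S := Set.Icc (-K) K with hS
  set g := fun t : ℝ => Complex.I * u * Complex.exp (Complex.I * u * t) with hg
  set M := ⨆ x : ℝ, |G x - F x| with hM
  haveI instFin : IsFiniteMeasure (volume.restrict S) :=
    ⟨by rw [Measure.restrict_apply_univ]; simp [hS, Real.volume_Icc]⟩
  -- basic bounds on F, G
  have h01 : ∀ (ρ : Measure ℝ) [IsProbabilityMeasure ρ] (s : Set ℝ),
      (0:ℝ) ≤ (ρ s).toReal ∧ (ρ s).toReal ≤ 1 := by
    intro ρ _ s
    refine ⟨ENNReal.toReal_nonneg, ?_⟩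
    simpa using ENNReal.toReal_mono ENNReal.one_ne_top prob_le_one
  have hbound1 : ∀ x, |G x - F x| ≤ 1 := by
    intro x
    have h1 := h01 ν (Set.Iic x); have h2 := h01 μ (Set.Iic x)
    rw [hG, hF, abs_sub_le_iff]
    constructor <;> linarith [h1.1, h1.2, h2.1, h2.2]
  have hbdd : BddAbove (Set.range fun x => |G x - F x|) := by
    refine ⟨1, ?_⟩; rintro _ ⟨x, rfl⟩; exact hbound1 x
  have hle : ∀ x, |G x - F x| ≤ M := fun x => le_ciSup hbdd x
  have hM0 : 0 ≤ M := (abs_nonneg _).trans (hle 0)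
  set cν := (ν (Set.Iio (-K))).toReal with hcν
  set cμ := (μ (Set.Iio (-K))).toReal with hcμ
  set c := cν - cμ with hc_def
  have hc : |c| ≤ M := iio_bound μ ν F G hF hG (-K) hbdd
  have hKK : -K ≤ K := by linarith
  -- monotonicity / measurability of F and G
  have hmonoFG : ∀ (ρ : Measure ℝ) [IsProbabilityMeasure ρ],
      Monotone (fun x => (ρ (Set.Iic x)).toReal) := by
    intro ρ _ x y hxy
    exact ENNReal.toReal_mono (measure_ne_top ρ _) (measure_mono (Set.Iic_subset_Iic.mpr hxy))
  have hGmeas : Measurable G := by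
    have : G = fun x => (ν (Set.Iic x)).toReal := funext hG
    rw [this]; exact (hmonoFG ν).measurable
  have hFmeas : Measurable F := by
    have : F = fun x => (μ (Set.Iic x)).toReal := funext hF
    rw [this]; exact (hmonoFG μ).measurable
  -- integrability helper
  have intOn : ∀ (φ : ℝ → ℝ), Measurable φ → ∀ C : ℝ, (∀ t, |φ t| ≤ C) →
      IntegrableOn (fun t => ((φ t : ℝ) : ℂ) * g t) S volume := by
    intro φ hφ C hC
    refine Integrable.mono' (integrable_const (C * |u|))
      ((Complex.measurable_ofReal.comp hφ).mul (cont_g u).measurable).aestronglyMeasurable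
      (ae_of_all _ fun t => ?_)
    rw [norm_mul, hg, norm_g, Complex.norm_real]
    exact mul_le_mul_of_nonneg_right (hC t) (abs_nonneg u)
  -- the cdf substitution
  have hsubst : ∀ (ρ : Measure ℝ) [IsProbabilityMeasure ρ] (t : ℝ), -K ≤ t →
      (ρ (Set.Icc (-K) t)).toReal = (ρ (Set.Iic t)).toReal - (ρ (Set.Iio (-K))).toReal :=
    fun ρ _ t h => cdf_Icc ρ (-K) t h
  have hIν : (∫ t in S, ((ν (Set.Icc (-K) t)).toReal : ℂ) * g t)
      = ∫ t in S, ((G t - cν : ℝ) : ℂ) * g t := by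
    refine setIntegral_congr_fun measurableSet_Icc (fun t ht => ?_)
    rw [hsubst ν t (Set.mem_Icc.mp ht).1, hG, hcν]
  have hIμ : (∫ t in S, ((μ (Set.Icc (-K) t)).toReal : ℂ) * g t)
      = ∫ t in S, ((F t - cμ : ℝ) : ℂ) * g t := by
    refine setIntegral_congr_fun measurableSet_Icc (fun t ht => ?_)
    rw [hsubst μ t (Set.mem_Icc.mp ht).1, hF, hcμ]
  have hgint : (∫ t in S, g t)
      = Complex.exp (Complex.I * u * K) - Complex.exp (Complex.I * u * (-K)) := by
    rw [hS, MeasureTheory.integral_Icc_eq_integral_Ioc, ← intervalIntegral.integral_of_le hKK, hg]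
    have := ftc u (-K) K
    rw [this]; push_cast; ring_nf
  -- integrabilities
  have intG : IntegrableOn (fun t => ((G t - cν : ℝ) : ℂ) * g t) S volume :=
    intOn _ (hGmeas.sub measurable_const) (1 + |cν|)
      (fun t => by
        have h1 := h01 ν (Set.Iic t)
        rw [hG] at *
        calc |(ν (Set.Iic t)).toReal - cν| ≤ |(ν (Set.Iic t)).toReal| + |cν| := abs_sub _ _
        _ ≤ 1 + |cν| := by rw [_root_.abs_of_nonneg h1.1]; linarith [h1.2])
  have intF : IntegrableOn (fun t => ((F t - cμ : ℝ) : ℂ) * g t) S volume :=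
    intOn _ (hFmeas.sub measurable_const) (1 + |cμ|)
      (fun t => by
        have h1 := h01 μ (Set.Iic t)
        rw [hF] at *
        calc |(μ (Set.Iic t)).toReal - cμ| ≤ |(μ (Set.Iic t)).toReal| + |cμ| := abs_sub _ _
        _ ≤ 1 + |cμ| := by rw [_root_.abs_of_nonneg h1.1]; linarith [h1.2])
  have intGF : IntegrableOn (fun t => ((G t - F t : ℝ) : ℂ) * g t) S volume :=
    intOn _ (hGmeas.sub hFmeas) M (fun t => hle t)
  have intc : IntegrableOn (fun t => ((c : ℝ) : ℂ) * g t) S volume :=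
    intOn _ measurable_const |c| (fun t => le_refl _)
  -- the difference of the two integrals
  have hdiff : (∫ t in S, ((G t - cν : ℝ) : ℂ) * g t) - (∫ t in S, ((F t - cμ : ℝ) : ℂ) * g t)
      = (∫ t in S, ((G t - F t : ℝ) : ℂ) * g t)
        - ((c : ℝ) : ℂ) * (Complex.exp (Complex.I * u * K) - Complex.exp (Complex.I * u * (-K))) := by
    rw [← hgint, ← MeasureTheory.integral_const_mul, ← integral_sub intG intF, ← integral_sub intGF intc]
    refine setIntegral_congr_fun measurableSet_Icc (fun t ht => ?_)
    simp only [hc_def]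
    push_cast
    ring
  -- cdf values at K
  have hνS : ((ν S).toReal : ℝ) = G K - cν := by
    rw [hS, hsubst ν K hKK, hG, hcν]
  have hμS : ((μ S).toReal : ℝ) = F K - cμ := by
    rw [hS, hsubst μ K hKK, hF, hcμ]
  -- main identity
  have hE : (∫ x in S, Complex.exp (Complex.I * u * x) ∂ν)
      - (∫ x in S, Complex.exp (Complex.I * u * x) ∂μ)
      = ((G K - F K : ℝ) : ℂ) * Complex.exp (Complex.I * u * K)
        - ((c : ℝ) : ℂ) * Complex.exp (Complex.I * u * (-K))
        - ∫ t in S, ((G t - F t : ℝ) : ℂ) * g t := by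
    rw [hS] at *
    rw [key ν u K, key μ u K]
    rw [show (∫ t in Set.Icc (-K) K, ((ν (Set.Icc (-K) t)).toReal : ℂ)
        * (Complex.I * u * Complex.exp (Complex.I * u * t))) = ∫ t in S, ((ν (Set.Icc (-K) t)).toReal : ℂ) * g t from rfl,
      show (∫ t in Set.Icc (-K) K, ((μ (Set.Icc (-K) t)).toReal : ℂ)
        * (Complex.I * u * Complex.exp (Complex.I * u * t))) = ∫ t in S, ((μ (Set.Icc (-K) t)).toReal : ℂ) * g t from rfl,
      hIν, hIμ, hνS, hμS]
    have h := hdiff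
    rw [hc_def] at h ⊢
    push_cast at h ⊢
    linear_combination -h
  rw [hE]
  -- norm bounds
  have hn1 : ‖((G K - F K : ℝ) : ℂ) * Complex.exp (Complex.I * u * K)‖ ≤ M := by
    rw [norm_mul, norm_e, Complex.norm_real, mul_one]
    exact hle K
  have hn2 : ‖((c : ℝ) : ℂ) * Complex.exp (Complex.I * u * (-K))‖ ≤ M := by
    rw [show (Complex.I * (u:ℂ) * -(K:ℂ)) = Complex.I * (u:ℂ) * ((-K : ℝ) : ℂ) by push_cast; ring]
    rw [norm_mul, norm_e u (-K), Complex.norm_real, mul_one]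
    exact hc
  have hn3 : ‖∫ t in S, ((G t - F t : ℝ) : ℂ) * g t‖ ≤ (M * |u|) * (2 * K) := by
    have hvol : (volume S).toReal = 2 * K := by
      rw [hS, Real.volume_Icc, ENNReal.toReal_ofReal (by linarith)]
      ring
    have := norm_setIntegral_le_of_norm_le_const (μ := volume) (s := S)
      (f := fun t => ((G t - F t : ℝ) : ℂ) * g t) (C := M * |u|)
      (by rw [hS, Real.volume_Icc]; exact ENNReal.ofReal_lt_top)
      (fun t _ => by
        rw [norm_mul, hg, norm_g, Complex.norm_real]
        exact mul_le_mul_of_nonneg_right (hle t) (abs_nonneg u))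
    rw [measureReal_def, hvol] at this
    exact this
  calc ‖_ - _ - _‖ ≤ ‖((G K - F K : ℝ) : ℂ) * Complex.exp (Complex.I * u * K)
        - ((c : ℝ) : ℂ) * Complex.exp (Complex.I * u * (-K))‖
        + ‖∫ t in S, ((G t - F t : ℝ) : ℂ) * g t‖ := norm_sub_le _ _
    _ ≤ (‖((G K - F K : ℝ) : ℂ) * Complex.exp (Complex.I * u * K)‖
        + ‖((c : ℝ) : ℂ) * Complex.exp (Complex.I * u * (-K))‖)
        + ‖∫ t in S, ((G t - F t : ℝ) : ℂ) * g t‖ := by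
        gcongr
        exact norm_sub_le _ _
    _ ≤ (M + M) + (M * |u|) * (2 * K) := add_le_add (add_le_add hn1 hn2) hn3
    _ = 2 * M + 2 * K * |u| * M := by ring
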